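/- Let γ : [0,1] → ℝ³ be a continuous injective curve such that the z-coordinate t ↦ z(γ(t)) is strictly monotone. Then for any two such curves γ, γ' with the same endpoints, the images are ambient isotopic in ℝ³ relative to the endpoints, via a level-preserving isotopy. -/

import Mathlib

open Set

private lemma aux_param (γ : ℝ → EuclideanSpace ℝ (Fin 3))
    (hc : ContinuousOn γ (Set.Icc 0 1))
    (hm : StrictMonoOn (fun t => γ t 2) (Set.Icc 0 1)) :
    ∃ c : ℝ → EuclideanSpace ℝ (Fin 3), Continuous c ∧
      (∀ t ∈ Set.Icc (0:ℝ) 1, c (γ t 2) = γ t) ∧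
      (∀ z, c z ∈ γ '' Set.Icc 0 1) ∧
      (∀ z, (c z) 2 = max (γ 0 2) (min (γ 1 2) z)) := by
  have h01 : (0:ℝ) ∈ Set.Icc (0:ℝ) 1 := ⟨le_refl _, zero_le_one⟩
  have h11 : (1:ℝ) ∈ Set.Icc (0:ℝ) 1 := ⟨zero_le_one, le_refl _⟩
  have hab : γ 0 2 < γ 1 2 := hm h01 h11 zero_lt_one
  have hproj : Continuous (fun x : EuclideanSpace ℝ (Fin 3) => x 2) := PiLp.continuous_apply 2 _ 2
  have hmem : ∀ t ∈ Set.Icc (0:ℝ) 1, γ t 2 ∈ Set.Icc (γ 0 2) (γ 1 2) := by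
    intro t ht
    exact ⟨hm.monotoneOn h01 ht ht.1, hm.monotoneOn ht h11 ht.2⟩
  set f : Set.Icc (0:ℝ) 1 → Set.Icc (γ 0 2) (γ 1 2) := fun t => ⟨γ t 2, hmem t t.2⟩ with hf
  have fcont : Continuous f := Continuous.subtype_mk (hproj.comp hc.restrict) _
  have finj : Function.Injective f := by
    intro a b hab2
    exact Subtype.ext (hm.injOn a.2 b.2 (congrArg Subtype.val hab2))
  have fsurj : Function.Surjective f := by
    intro z
    have hgz : ContinuousOn (fun t => γ t 2) (Set.Icc 0 1) :=
      fun t ht => (hproj.continuousAt).comp_continuousWithinAt (hc t ht)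
    obtain ⟨t, ht, hgt⟩ := intermediate_value_Icc zero_le_one hgz z.2
    exact ⟨⟨t, ht⟩, Subtype.ext hgt⟩
  set e : Set.Icc (0:ℝ) 1 ≃ Set.Icc (γ 0 2) (γ 1 2) := Equiv.ofBijective f ⟨finj, fsurj⟩ with he
  have hecont : Continuous e := fcont
  set h : Set.Icc (0:ℝ) 1 ≃ₜ Set.Icc (γ 0 2) (γ 1 2) :=
    Continuous.homeoOfEquivCompactToT2 (f := e) hecont with hh
  refine ⟨fun z => (Set.Icc (0:ℝ) 1).restrict γ
      (h.symm (Set.projIcc (γ 0 2) (γ 1 2) hab.le z)), ?_, ?_, ?_, ?_⟩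
  · exact hc.restrict.comp (h.symm.continuous.comp continuous_projIcc)
  · intro t ht
    have hz : γ t 2 ∈ Set.Icc (γ 0 2) (γ 1 2) := hmem t ht
    have h1 : Set.projIcc (γ 0 2) (γ 1 2) hab.le (γ t 2) = ⟨γ t 2, hz⟩ :=
      Set.projIcc_of_mem _ hz
    have h2 : h.symm ⟨γ t 2, hz⟩ = ⟨t, ht⟩ := by
      rw [show (⟨γ t 2, hz⟩ : Set.Icc (γ 0 2) (γ 1 2)) = h ⟨t, ht⟩ from Subtype.ext rfl]
      exact h.symm_apply_apply _
    simp only [h1, h2]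
    rfl
  · intro z
    exact ⟨_, (h.symm (Set.projIcc (γ 0 2) (γ 1 2) hab.le z)).2, rfl⟩
  · intro z
    have key : ∀ u : Set.Icc (0:ℝ) 1, γ (u : ℝ) 2 = ((h u : Set.Icc (γ 0 2) (γ 1 2)) : ℝ) :=
      fun u => rfl
    have h3 := key (h.symm (Set.projIcc (γ 0 2) (γ 1 2) hab.le z))
    rw [Homeomorph.apply_symm_apply] at h3
    calc ((Set.Icc (0:ℝ) 1).restrict γ (h.symm (Set.projIcc (γ 0 2) (γ 1 2) hab.le z))) 2
        = ((Set.projIcc (γ 0 2) (γ 1 2) hab.le z : Set.Icc (γ 0 2) (γ 1 2)) : ℝ) := h3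
      _ = max (γ 0 2) (min (γ 1 2) z) := Set.coe_projIcc _ _ _ _

private lemma core_mono (γ γ' : ℝ → EuclideanSpace ℝ (Fin 3))
    (hγc : ContinuousOn γ (Set.Icc 0 1)) (hγ'c : ContinuousOn γ' (Set.Icc 0 1))
    (hm : StrictMonoOn (fun t => γ t 2) (Set.Icc 0 1))
    (hm' : StrictMonoOn (fun t => γ' t 2) (Set.Icc 0 1))
    (h0 : γ 0 = γ' 0) (h1 : γ 1 = γ' 1) :
    ∃ H : ℝ → (EuclideanSpace ℝ (Fin 3) ≃ₜ EuclideanSpace ℝ (Fin 3)),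
      Continuous (fun p : ℝ × EuclideanSpace ℝ (Fin 3) => H p.1 p.2) ∧
      Continuous (fun p : ℝ × EuclideanSpace ℝ (Fin 3) => (H p.1).symm p.2) ∧
      H 0 = Homeomorph.refl _ ∧
      (∀ s, H s (γ 0) = γ 0) ∧ (∀ s, H s (γ 1) = γ 1) ∧
      (∀ s x, (H s x) 2 = x 2) ∧
      H 1 '' (γ '' Set.Icc 0 1) = γ' '' Set.Icc 0 1 := by
  have h01 : (0:ℝ) ∈ Set.Icc (0:ℝ) 1 := ⟨le_refl _, zero_le_one⟩
  have h11 : (1:ℝ) ∈ Set.Icc (0:ℝ) 1 := ⟨zero_le_one, le_refl _⟩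
  obtain ⟨c, hccont, hc2, hc3, hc4⟩ := aux_param γ hγc hm
  obtain ⟨c', hc'cont, hc'2, hc'3, hc'4⟩ := aux_param γ' hγ'c hm'
  have hz0 : γ' 0 2 = γ 0 2 := by rw [h0]
  have hz1 : γ' 1 2 = γ 1 2 := by rw [h1]
  set d : ℝ → EuclideanSpace ℝ (Fin 3) := fun z => c' z - c z with hd
  have hdcont : Continuous d := hc'cont.sub hccont
  have hproj : Continuous (fun x : EuclideanSpace ℝ (Fin 3) => x 2) := PiLp.continuous_apply 2 _ 2
  have hd2 : ∀ z, d z 2 = 0 := by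
    intro z
    have e1 := hc4 z
    have e2 := hc'4 z
    rw [hz0, hz1] at e2
    show c' z 2 - c z 2 = 0
    rw [e1, e2, sub_self]
  have hdz0 : d (γ 0 2) = 0 := by
    have e1 : c (γ 0 2) = γ 0 := hc2 0 h01
    have e2 : c' (γ 0 2) = γ 0 := by rw [h0]; exact hc'2 0 h01
    show c' (γ 0 2) - c (γ 0 2) = 0
    rw [e1, e2, sub_self]
  have hdz1 : d (γ 1 2) = 0 := by
    have e1 : c (γ 1 2) = γ 1 := hc2 1 h11
    have e2 : c' (γ 1 2) = γ 1 := by rw [h1]; exact hc'2 1 h11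
    show c' (γ 1 2) - c (γ 1 2) = 0
    rw [e1, e2, sub_self]
  have hlvl : ∀ (s : ℝ) (x : EuclideanSpace ℝ (Fin 3)), (x + s • d (x 2)) 2 = x 2 := by
    intro s x
    show x 2 + s * d (x 2) 2 = x 2
    rw [hd2, mul_zero, add_zero]
  have hlvl' : ∀ (s : ℝ) (x : EuclideanSpace ℝ (Fin 3)), (x - s • d (x 2)) 2 = x 2 := by
    intro s x
    show x 2 - s * d (x 2) 2 = x 2
    rw [hd2, mul_zero, sub_zero]
  refine ⟨fun s =>
    { toFun := fun x => x + s • d (x 2)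
      invFun := fun x => x - s • d (x 2)
      left_inv := fun x => by
        show x + s • d (x 2) - s • d ((x + s • d (x 2)) 2) = x
        rw [hlvl]
        exact add_sub_cancel_right x (s • d (x 2))
      right_inv := fun x => by
        show x - s • d (x 2) + s • d ((x - s • d (x 2)) 2) = x
        rw [hlvl']
        exact sub_add_cancel x (s • d (x 2))
      continuous_toFun := continuous_id.add ((continuous_const : Continuous fun _ : EuclideanSpace ℝ (Fin 3) => s).smul (hdcont.comp hproj))
      continuous_invFun := continuous_id.sub ((continuous_const : Continuous fun _ : EuclideanSpace ℝ (Fin 3) => s).smul (hdcont.comp hproj)) },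
    ?_, ?_, ?_, ?_, ?_, ?_, ?_⟩
  · show Continuous fun p : ℝ × EuclideanSpace ℝ (Fin 3) => p.2 + p.1 • d (p.2 2)
    exact continuous_snd.add (continuous_fst.smul (hdcont.comp (hproj.comp continuous_snd)))
  · show Continuous fun p : ℝ × EuclideanSpace ℝ (Fin 3) => p.2 - p.1 • d (p.2 2)
    exact continuous_snd.sub (continuous_fst.smul (hdcont.comp (hproj.comp continuous_snd)))
  · apply Homeomorph.toEquiv_injective
    apply Equiv.ext
    intro x
    show x + (0:ℝ) • d (x 2) = x
    rw [zero_smul, add_zero]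
  · intro s
    show γ 0 + s • d (γ 0 2) = γ 0
    rw [hdz0, smul_zero, add_zero]
  · intro s
    show γ 1 + s • d (γ 1 2) = γ 1
    rw [hdz1, smul_zero, add_zero]
  · exact hlvl
  · have key : ∀ t ∈ Set.Icc (0:ℝ) 1, γ t + (1:ℝ) • d (γ t 2) = c' (γ t 2) := by
      intro t ht
      rw [one_smul]
      show γ t + (c' (γ t 2) - c (γ t 2)) = c' (γ t 2)
      rw [hc2 t ht]
      abel
    apply Set.Subset.antisymm
    · rintro _ ⟨_, ⟨t, ht, rfl⟩, rfl⟩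
      show γ t + (1:ℝ) • d (γ t 2) ∈ γ' '' Set.Icc 0 1
      rw [key t ht]
      exact hc'3 (γ t 2)
    · rintro _ ⟨t, ht, rfl⟩
      have hzmem : γ' t 2 ∈ Set.Icc (γ 0 2) (γ 1 2) := by
        constructor
        · rw [← hz0]; exact hm'.monotoneOn h01 ht ht.1
        · rw [← hz1]; exact hm'.monotoneOn ht h11 ht.2
      obtain ⟨s, hs, hgs⟩ := hc3 (γ' t 2)
      have hs2 : γ s 2 = γ' t 2 := by
        rw [hgs, hc4, min_eq_right hzmem.2, max_eq_right hzmem.1]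
      refine ⟨γ s, ⟨s, hs, rfl⟩, ?_⟩
      show γ s + (1:ℝ) • d (γ s 2) = γ' t
      rw [key s hs, hs2]
      exact hc'2 t ht

private lemma image_reverse (f : ℝ → EuclideanSpace ℝ (Fin 3)) :
    (fun t => f (1 - t)) '' Set.Icc 0 1 = f '' Set.Icc 0 1 := by
  ext x
  constructor
  · rintro ⟨t, ht, rfl⟩
    exact ⟨1 - t, ⟨by linarith [ht.2], by linarith [ht.1]⟩, rfl⟩
  · rintro ⟨t, ht, rfl⟩
    exact ⟨1 - t, ⟨by linarith [ht.2], by linarith [ht.1]⟩, by norm_num⟩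

/-- Denne–Sullivan, single-edge case: two height-monotone simple arcs in
`ℝ³` with the same endpoints are ambient isotopic rel endpoints, via a level-preserving
ambient isotopy. -/
theorem monotone_arcs_ambient_isotopic
    (γ γ' : ℝ → EuclideanSpace ℝ (Fin 3))
    (hγc : ContinuousOn γ (Set.Icc 0 1)) (hγ'c : ContinuousOn γ' (Set.Icc 0 1))
    (hγi : Set.InjOn γ (Set.Icc 0 1)) (hγ'i : Set.InjOn γ' (Set.Icc 0 1))
    (hmono : StrictMonoOn (fun t => γ t 2) (Set.Icc 0 1) ∨
      StrictAntiOn (fun t => γ t 2) (Set.Icc 0 1))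
    (hmono' : StrictMonoOn (fun t => γ' t 2) (Set.Icc 0 1) ∨
      StrictAntiOn (fun t => γ' t 2) (Set.Icc 0 1))
    (h0 : γ 0 = γ' 0) (h1 : γ 1 = γ' 1) :
    ∃ H : ℝ → (EuclideanSpace ℝ (Fin 3) ≃ₜ EuclideanSpace ℝ (Fin 3)),
      Continuous (fun p : ℝ × EuclideanSpace ℝ (Fin 3) => H p.1 p.2) ∧
      Continuous (fun p : ℝ × EuclideanSpace ℝ (Fin 3) => (H p.1).symm p.2) ∧
      H 0 = Homeomorph.refl _ ∧
      (∀ s, H s (γ 0) = γ 0) ∧ (∀ s, H s (γ 1) = γ 1) ∧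
      -- level-preserving: each homeomorphism preserves the z-coordinate
      (∀ s x, (H s x) 2 = x 2) ∧
      H 1 '' (γ '' Set.Icc 0 1) = γ' '' Set.Icc 0 1 := by
  have h01 : (0:ℝ) ∈ Set.Icc (0:ℝ) 1 := ⟨le_refl _, zero_le_one⟩
  have h11 : (1:ℝ) ∈ Set.Icc (0:ℝ) 1 := ⟨zero_le_one, le_refl _⟩
  have hz0 : γ 0 2 = γ' 0 2 := by rw [h0]
  have hz1 : γ 1 2 = γ' 1 2 := by rw [h1]
  rcases hmono with hm | ha <;> rcases hmono' with hm' | ha'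
  · exact core_mono γ γ' hγc hγ'c hm hm' h0 h1
  · exfalso
    have e1 : γ 0 2 < γ 1 2 := hm h01 h11 zero_lt_one
    have e2 : γ' 1 2 < γ' 0 2 := ha' h01 h11 zero_lt_one
    linarith
  · exfalso
    have e1 : γ 1 2 < γ 0 2 := ha h01 h11 zero_lt_one
    have e2 : γ' 0 2 < γ' 1 2 := hm' h01 h11 zero_lt_one
    linarith
  · set δ : ℝ → EuclideanSpace ℝ (Fin 3) := fun t => γ (1 - t) with hδ
    set δ' : ℝ → EuclideanSpace ℝ (Fin 3) := fun t => γ' (1 - t) with hδ'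
    have hmap : ∀ t ∈ Set.Icc (0:ℝ) 1, 1 - t ∈ Set.Icc (0:ℝ) 1 := by
      intro t ht
      exact ⟨by linarith [ht.2], by linarith [ht.1]⟩
    have hδc : ContinuousOn δ (Set.Icc 0 1) :=
      hγc.comp ((continuous_const.sub continuous_id).continuousOn) hmap
    have hδ'c : ContinuousOn δ' (Set.Icc 0 1) :=
      hγ'c.comp ((continuous_const.sub continuous_id).continuousOn) hmap
    have hδm : StrictMonoOn (fun t => δ t 2) (Set.Icc 0 1) := by
      intro a ha2 b hb2 hab
      exact ha (hmap b hb2) (hmap a ha2) (by linarith)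
    have hδ'm : StrictMonoOn (fun t => δ' t 2) (Set.Icc 0 1) := by
      intro a ha2 b hb2 hab
      exact ha' (hmap b hb2) (hmap a ha2) (by linarith)
    have hδ0 : δ 0 = γ 1 := by show γ (1 - 0) = γ 1; norm_num
    have hδ1 : δ 1 = γ 0 := by show γ (1 - 1) = γ 0; norm_num
    have hδ'0 : δ' 0 = γ' 1 := by show γ' (1 - 0) = γ' 1; norm_num
    have hδ'1 : δ' 1 = γ' 0 := by show γ' (1 - 1) = γ' 0; norm_num
    obtain ⟨H, hcont1, hcont2, hrefl, hf0, hf1, hlev, him⟩ :=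
      core_mono δ δ' hδc hδ'c hδm hδ'm (by rw [hδ0, hδ'0, h1]) (by rw [hδ1, hδ'1, h0])
    refine ⟨H, hcont1, hcont2, hrefl, ?_, ?_, hlev, ?_⟩
    · intro s
      have := hf1 s
      rwa [hδ1] at this
    · intro s
      have := hf0 s
      rwa [hδ0] at this
    · have e1 : δ '' Set.Icc 0 1 = γ '' Set.Icc 0 1 := image_reverse γ
      have e2 : δ' '' Set.Icc 0 1 = γ' '' Set.Icc 0 1 := image_reverse γ'
      rw [e1, e2] at him
      exact him
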